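/- Let L be an e-cyclic residuated lattice and a ∈ L. Then C[a] = C[|a|] = {x ∈ L : |a|^n ≤ x ≤ |a|^n\e for some n ∈ ℕ} = {x ∈ L : |a|^n ≤ |x| for some n ∈ ℕ}. -/
import Mathlib


universe u

/-- A residuated lattice: a lattice-ordered monoid with left and right residuals.
`ldiv x z` is `x \ z` and `rdiv z y` is `z / y`. -/
class ResiduatedLattice (α : Type u) extends Lattice α, Monoid α where
  ldiv : α → α → α
  rdiv : α → α → α
  mul_le_iff_le_ldiv : ∀ x y z : α, x * y ≤ z ↔ y ≤ ldiv x z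
  mul_le_iff_le_rdiv : ∀ x y z : α, x * y ≤ z ↔ x ≤ rdiv z y

namespace ResiduatedLattice

variable {α : Type u} [ResiduatedLattice α]

/-- `L` is e-cyclic if `x \ e = e / x` for all `x`. -/
def ECyclic (α : Type u) [ResiduatedLattice α] : Prop :=
  ∀ x : α, ldiv x 1 = rdiv 1 x

/-- Absolute value: `|x| = x ⊓ (e / x) ⊓ e`. -/
def absv (x : α) : α := x ⊓ rdiv 1 x ⊓ 1

/-- A convex subalgebra: contains `e`, closed under all the operations, and order-convex. -/
structure IsConvexSubalgebra (H : Set α) : Prop where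
  one_mem : (1 : α) ∈ H
  mul_mem : ∀ ⦃x⦄, x ∈ H → ∀ ⦃y⦄, y ∈ H → x * y ∈ H
  sup_mem : ∀ ⦃x⦄, x ∈ H → ∀ ⦃y⦄, y ∈ H → x ⊔ y ∈ H
  inf_mem : ∀ ⦃x⦄, x ∈ H → ∀ ⦃y⦄, y ∈ H → x ⊓ y ∈ H
  ldiv_mem : ∀ ⦃x⦄, x ∈ H → ∀ ⦃y⦄, y ∈ H → ldiv x y ∈ H
  rdiv_mem : ∀ ⦃x⦄, x ∈ H → ∀ ⦃y⦄, y ∈ H → rdiv x y ∈ H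
  convex : ∀ ⦃a⦄, a ∈ H → ∀ ⦃b⦄, b ∈ H → ∀ ⦃x⦄, a ≤ x → x ≤ b → x ∈ H

/-- `C[S]`: the smallest convex subalgebra containing `S`. -/
def convexClosure (S : Set α) : Set α :=
  ⋂₀ {H : Set α | IsConvexSubalgebra H ∧ S ⊆ H}

end ResiduatedLattice

open ResiduatedLattice

namespace ResiduatedLattice

variable {α : Type u} [ResiduatedLattice α]

lemma mul_ldiv_le (x z : α) : x * ldiv x z ≤ z :=
  (mul_le_iff_le_ldiv x (ldiv x z) z).mpr le_rfl

lemma rdiv_mul_le (z y : α) : rdiv z y * y ≤ z :=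
  (mul_le_iff_le_rdiv (rdiv z y) y z).mpr le_rfl

lemma rl_mul_le_mul_left {x y : α} (h : x ≤ y) (z : α) : z * x ≤ z * y := by
  rw [mul_le_iff_le_ldiv]
  exact h.trans ((mul_le_iff_le_ldiv z y (z * y)).mp le_rfl)

lemma rl_mul_le_mul_right {x y : α} (h : x ≤ y) (z : α) : x * z ≤ y * z := by
  rw [mul_le_iff_le_rdiv]
  exact h.trans ((mul_le_iff_le_rdiv y z (y * z)).mp le_rfl)

lemma ldiv_le_ldiv_left {x y : α} (h : x ≤ y) (z : α) : ldiv y z ≤ ldiv x z := by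
  rw [← mul_le_iff_le_ldiv]
  exact (rl_mul_le_mul_right h _).trans (mul_ldiv_le y z)

lemma ldiv_le_ldiv_right {x y : α} (h : x ≤ y) (z : α) : ldiv z x ≤ ldiv z y := by
  rw [← mul_le_iff_le_ldiv]
  exact (mul_ldiv_le z x).trans h

lemma rdiv_le_rdiv_left {x y : α} (h : x ≤ y) (z : α) : rdiv x z ≤ rdiv y z := by
  rw [← mul_le_iff_le_rdiv]
  exact (rdiv_mul_le x z).trans h

lemma rdiv_le_rdiv_right {x y : α} (h : x ≤ y) (z : α) : rdiv z y ≤ rdiv z x := by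
  rw [← mul_le_iff_le_rdiv]
  exact (rl_mul_le_mul_left h _).trans (rdiv_mul_le z y)

lemma ldiv_ldiv_le (x y z : α) : ldiv x (ldiv y z) ≤ ldiv (y * x) z := by
  rw [← mul_le_iff_le_ldiv, mul_assoc]
  exact (rl_mul_le_mul_left (mul_ldiv_le x (ldiv y z)) y).trans (mul_ldiv_le y z)

lemma rdiv_rdiv_le (x y z : α) : rdiv (rdiv z y) x ≤ rdiv z (x * y) := by
  rw [← mul_le_iff_le_rdiv, ← mul_assoc]
  exact (rl_mul_le_mul_right (rdiv_mul_le (rdiv z y) x) y).trans (rdiv_mul_le z y)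

lemma pow_le_one {b : α} (hb : b ≤ 1) : ∀ n : ℕ, b ^ n ≤ (1 : α)
  | 0 => by simp
  | n + 1 => by
      rw [pow_succ]
      calc b ^ n * b ≤ b ^ n * 1 := rl_mul_le_mul_left hb _
        _ = b ^ n := mul_one _
        _ ≤ 1 := pow_le_one hb n

lemma pow_le_pow {b : α} (hb : b ≤ 1) {n m : ℕ} (h : n ≤ m) : b ^ m ≤ b ^ n := by
  obtain ⟨k, rfl⟩ := Nat.exists_eq_add_of_le h
  rw [pow_add]
  calc b ^ n * b ^ k ≤ b ^ n * 1 := rl_mul_le_mul_left (pow_le_one hb k) _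
    _ = b ^ n := mul_one _

lemma absv_le_one (x : α) : absv x ≤ 1 := inf_le_right

lemma absv_le_self (x : α) : absv x ≤ x := inf_le_left.trans inf_le_left

lemma absv_le_rdiv (x : α) : absv x ≤ rdiv 1 x := inf_le_left.trans inf_le_right

/-- The candidate set for `C[a]`. -/
def principalSet (a : α) : Set α :=
  {x : α | ∃ n : ℕ, absv a ^ n ≤ x ∧ x ≤ ldiv (absv a ^ n) 1}

lemma principalSet_mono {a x : α} {n m : ℕ} (h : n ≤ m)
    (h1 : absv a ^ n ≤ x) (h2 : x ≤ ldiv (absv a ^ n) 1) :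
    absv a ^ m ≤ x ∧ x ≤ ldiv (absv a ^ m) 1 :=
  ⟨(pow_le_pow (absv_le_one a) h).trans h1,
   h2.trans (ldiv_le_ldiv_left (pow_le_pow (absv_le_one a) h) 1)⟩

lemma self_mem_principalSet (a : α) : a ∈ principalSet a := by
  refine ⟨1, ?_, ?_⟩
  · rw [pow_one]; exact absv_le_self a
  · rw [pow_one, ← mul_le_iff_le_ldiv]
    exact (rl_mul_le_mul_right (absv_le_rdiv a) a).trans (rdiv_mul_le 1 a)

lemma absv_mem_principalSet (a : α) : absv a ∈ principalSet a := by
  refine ⟨1, by rw [pow_one], ?_⟩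
  rw [pow_one, ← mul_le_iff_le_ldiv]
  calc absv a * absv a ≤ absv a * 1 := rl_mul_le_mul_left (absv_le_one a) _
    _ = absv a := mul_one _
    _ ≤ 1 := absv_le_one a

lemma principalSet_isConvexSubalgebra (hec : ECyclic α) (a : α) :
    IsConvexSubalgebra (principalSet a) := by
  set b := absv a with hb
  have hb1 : b ≤ 1 := absv_le_one a
  constructor
  · exact ⟨0, by simp, by rw [← mul_le_iff_le_ldiv]; simp⟩
  · rintro x ⟨n, hn1, hn2⟩ y ⟨m, hm1, hm2⟩
    obtain ⟨hn1, hn2⟩ := principalSet_mono (le_max_left n m) hn1 hn2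
    obtain ⟨hm1, hm2⟩ := principalSet_mono (le_max_right n m) hm1 hm2
    set k := max n m
    refine ⟨k + k, ?_, ?_⟩
    · rw [pow_add]
      exact (rl_mul_le_mul_left hm1 _).trans (rl_mul_le_mul_right hn1 _)
    · rw [← mul_le_iff_le_ldiv, pow_add]
      have hbx : b ^ k * x ≤ 1 := (mul_le_iff_le_ldiv _ _ _).mpr hn2
      have hby : b ^ k * y ≤ 1 := (mul_le_iff_le_ldiv _ _ _).mpr hm2
      calc b ^ k * b ^ k * (x * y) = b ^ k * ((b ^ k * x) * y) := by
            rw [mul_assoc, ← mul_assoc (b ^ k) x y]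
        _ ≤ b ^ k * (1 * y) :=
            rl_mul_le_mul_left (rl_mul_le_mul_right hbx y) _
        _ = b ^ k * y := by rw [one_mul]
        _ ≤ 1 := hby
  · rintro x ⟨n, hn1, hn2⟩ y ⟨m, hm1, hm2⟩
    obtain ⟨hn1, hn2⟩ := principalSet_mono (le_max_left n m) hn1 hn2
    obtain ⟨hm1, hm2⟩ := principalSet_mono (le_max_right n m) hm1 hm2
    exact ⟨max n m, hn1.trans le_sup_left, sup_le hn2 hm2⟩
  · rintro x ⟨n, hn1, hn2⟩ y ⟨m, hm1, hm2⟩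
    obtain ⟨hn1, hn2⟩ := principalSet_mono (le_max_left n m) hn1 hn2
    obtain ⟨hm1, hm2⟩ := principalSet_mono (le_max_right n m) hm1 hm2
    exact ⟨max n m, le_inf hn1 hm1, inf_le_left.trans hn2⟩
  · -- ldiv
    rintro x ⟨n, hn1, hn2⟩ y ⟨m, hm1, hm2⟩
    obtain ⟨hn1, hn2⟩ := principalSet_mono (le_max_left n m) hn1 hn2
    obtain ⟨hm1, hm2⟩ := principalSet_mono (le_max_right n m) hm1 hm2
    set k := max n m
    refine ⟨k + k, ?_, ?_⟩
    · -- b^(k+k) ≤ ldiv x y, i.e. x * b^(k+k) ≤ y ; uses e-cyclicity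
      rw [← mul_le_iff_le_ldiv, pow_add, ← mul_assoc]
      have hx : x * b ^ k ≤ 1 := by
        rw [mul_le_iff_le_rdiv, ← hec]
        exact hn2
      calc x * b ^ k * b ^ k ≤ 1 * b ^ k := rl_mul_le_mul_right hx _
        _ = b ^ k := one_mul _
        _ ≤ y := hm1
    · -- ldiv x y ≤ ldiv (b^(k+k)) 1
      calc ldiv x y ≤ ldiv (b ^ k) y := ldiv_le_ldiv_left hn1 y
        _ ≤ ldiv (b ^ k) (ldiv (b ^ k) 1) := ldiv_le_ldiv_right hm2 _
        _ ≤ ldiv (b ^ k * b ^ k) 1 := ldiv_ldiv_le _ _ _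
        _ = ldiv (b ^ (k + k)) 1 := by rw [pow_add]
  · -- rdiv
    rintro x ⟨n, hn1, hn2⟩ y ⟨m, hm1, hm2⟩
    obtain ⟨hn1, hn2⟩ := principalSet_mono (le_max_left n m) hn1 hn2
    obtain ⟨hm1, hm2⟩ := principalSet_mono (le_max_right n m) hm1 hm2
    set k := max n m
    refine ⟨k + k, ?_, ?_⟩
    · -- b^(k+k) ≤ rdiv x y, i.e. b^(k+k) * y ≤ x
      rw [← mul_le_iff_le_rdiv, pow_add, mul_assoc]
      have hy : b ^ k * y ≤ 1 := (mul_le_iff_le_ldiv _ _ _).mpr hm2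
      calc b ^ k * (b ^ k * y) ≤ b ^ k * 1 := rl_mul_le_mul_left hy _
        _ = b ^ k := mul_one _
        _ ≤ x := hn1
    · -- rdiv x y ≤ ldiv (b^(k+k)) 1 ; uses e-cyclicity
      rw [hec]
      calc rdiv x y ≤ rdiv x (b ^ k) := rdiv_le_rdiv_right hm1 x
        _ ≤ rdiv (rdiv 1 (b ^ k)) (b ^ k) :=
            rdiv_le_rdiv_left (hn2.trans_eq (hec _)) _
        _ ≤ rdiv 1 (b ^ k * b ^ k) := rdiv_rdiv_le _ _ _
        _ = rdiv 1 (b ^ (k + k)) := by rw [pow_add]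
  · rintro u ⟨n, hn1, _⟩ v ⟨m, _, hm2⟩ x hux hxv
    exact ⟨max n m,
      ((pow_le_pow hb1 (le_max_left n m)).trans hn1).trans hux,
      (hxv.trans hm2).trans
        (ldiv_le_ldiv_left (pow_le_pow hb1 (le_max_right n m)) 1)⟩

lemma principalSet_subset {a : α} {K : Set α} (hK : IsConvexSubalgebra K)
    (hb : absv a ∈ K) : principalSet a ⊆ K := by
  have hpow : ∀ n : ℕ, absv a ^ n ∈ K := by
    intro n
    induction n with
    | zero => simpa using hK.one_mem
    | succ n ih => rw [pow_succ]; exact hK.mul_mem ih hb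
  rintro x ⟨n, h1, h2⟩
  exact hK.convex (hpow n) (hK.ldiv_mem (hpow n) hK.one_mem) h1 h2

lemma absv_mem {a : α} {K : Set α} (hK : IsConvexSubalgebra K) (ha : a ∈ K) :
    absv a ∈ K :=
  hK.inf_mem (hK.inf_mem ha (hK.rdiv_mem hK.one_mem ha)) hK.one_mem

lemma principalSet_eq_absv (a : α) :
    principalSet a = {x : α | ∃ n : ℕ, absv a ^ n ≤ absv x} := by
  ext x
  constructor
  · rintro ⟨n, h1, h2⟩
    refine ⟨n, le_inf (le_inf h1 ?_) (pow_le_one (absv_le_one a) n)⟩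
    rw [← mul_le_iff_le_rdiv]
    exact (mul_le_iff_le_ldiv _ _ _).mpr h2
  · rintro ⟨n, h⟩
    refine ⟨n, h.trans (absv_le_self x), ?_⟩
    rw [← mul_le_iff_le_ldiv]
    exact (mul_le_iff_le_rdiv _ _ _).mpr (h.trans (absv_le_rdiv x))

lemma convexClosure_eq_principalSet (hec : ECyclic α) (a : α) :
    convexClosure {a} = principalSet a := by
  apply Set.Subset.antisymm
  · exact Set.sInter_subset_of_mem
      ⟨principalSet_isConvexSubalgebra hec a,
       Set.singleton_subset_iff.mpr (self_mem_principalSet a)⟩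
  · intro x hx
    refine Set.mem_sInter.mpr ?_
    rintro K ⟨hK, hsub⟩
    exact principalSet_subset hK (absv_mem hK (hsub rfl)) hx

lemma convexClosure_absv_eq_principalSet (hec : ECyclic α) (a : α) :
    convexClosure {absv a} = principalSet a := by
  apply Set.Subset.antisymm
  · exact Set.sInter_subset_of_mem
      ⟨principalSet_isConvexSubalgebra hec a,
       Set.singleton_subset_iff.mpr (absv_mem_principalSet a)⟩
  · intro x hx
    refine Set.mem_sInter.mpr ?_
    rintro K ⟨hK, hsub⟩
    exact principalSet_subset hK (hsub rfl) hx

end ResiduatedLattice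

/-- element-wise description of the principal convex subalgebra `C[a]`. -/
theorem stmt1 {α : Type u} [ResiduatedLattice α] (hec : ECyclic α) (a : α) :
    convexClosure {a} = convexClosure {absv a} ∧
    convexClosure {a} = {x : α | ∃ n : ℕ, absv a ^ n ≤ x ∧ x ≤ ldiv (absv a ^ n) 1} ∧
    convexClosure {a} = {x : α | ∃ n : ℕ, absv a ^ n ≤ absv x} := by
  refine ⟨?_, ?_, ?_⟩
  · rw [convexClosure_eq_principalSet hec, convexClosure_absv_eq_principalSet hec]
  · exact convexClosure_eq_principalSet hec a
  · rw [convexClosure_eq_principalSet hec, principalSet_eq_absv]
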